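/- Let γ > 0, K > 0, 0 ≤ σ_s < σ_f with σ_s < 1, and let τ, t₁ ∈ ℝ and x₁ with 1/σ_f < x₁ ≤ 1. Define F(t₂) = τ + σ_f (t₂ - t₁)/(σ_s - σ_f) + (γ K (σ_s - σ_f))⁻¹ · ln(1 - γ K (t₂ - t₁)/x₁) on the set I = {t₂ ≥ t₁ : x₁ - γ K (t₂ - t₁) > 1/σ_f}. Then the function H(t₂) = F(t₂) + t₂ is strictly increasing on I. -/

import Mathlib

set_option maxHeartbeats 1000000


open Set


private lemma H_deriv_eq (σs σf A u x₁ : ℝ) (hA : A ≠ 0) (hc : σs - σf ≠ 0)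
    (hu : u ≠ 0) (hx : x₁ ≠ 0) :
    σf / (σs - σf) + (A * (σs - σf))⁻¹ * (-(A / x₁) / (u / x₁)) + 1
      = (1 - σs * u) / ((σf - σs) * u) := by
  have hc' : σf - σs ≠ 0 := fun h => hc (by linarith [sub_eq_zero.mp h])
  field_simp
  ring

/-- The end time `H(t₂) = F(t₂) + t₂` of the strict quarantine of maximal duration
starting at `t₂` is strictly increasing on the admissible set. -/
theorem H_strictMono
    (γ K σs σf τ t₁ x₁ : ℝ) (hγ : 0 < γ) (hK : 0 < K)
    (hσs : 0 ≤ σs) (hσsf : σs < σf) (hσs1 : σs < 1)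
    (hx₁ : 1 / σf < x₁) (hx₁le : x₁ ≤ 1)
    (F : ℝ → ℝ)
    (hF : ∀ t₂, F t₂ = τ + σf * (t₂ - t₁) / (σs - σf)
      + (γ * K * (σs - σf))⁻¹ * Real.log (1 - γ * K * (t₂ - t₁) / x₁))
    (I : Set ℝ)
    (hI : I = {t₂ : ℝ | t₁ ≤ t₂ ∧ 1 / σf < x₁ - γ * K * (t₂ - t₁)}) :
    StrictMonoOn (fun t₂ => F t₂ + t₂) I := by
  have hσf : 0 < σf := lt_of_le_of_lt hσs hσsf
  have hx₁pos : 0 < x₁ := lt_trans (by positivity) hx₁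
  have hc : σs - σf < 0 := by linarith
  have ha : 0 < γ * K := mul_pos hγ hK
  set b : ℝ := t₁ + (x₁ - 1 / σf) / (γ * K) with hb
  have hIeq : I = Ico t₁ b := by
    rw [hI]
    ext t
    simp only [mem_setOf_eq, mem_Ico, hb]
    constructor
    · rintro ⟨h1, h2⟩
      refine ⟨h1, ?_⟩
      rw [← sub_lt_iff_lt_add']
      rw [lt_div_iff₀ ha]
      nlinarith
    · rintro ⟨h1, h2⟩
      refine ⟨h1, ?_⟩
      rw [← sub_lt_iff_lt_add'] at h2
      rw [lt_div_iff₀ ha] at h2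
      nlinarith
  have hfun : (fun t₂ => F t₂ + t₂) = fun t => τ + σf * (t - t₁) / (σs - σf)
      + (γ * K * (σs - σf))⁻¹ * Real.log (1 - γ * K * (t - t₁) / x₁) + t := by
    funext t; rw [hF]
  have hupos : ∀ t ∈ Ico t₁ b, 1 / σf < x₁ - γ * K * (t - t₁) ∧ x₁ - γ * K * (t - t₁) ≤ 1 := by
    intro t ht
    obtain ⟨h1, h2⟩ := ht
    constructor
    · rw [hb, ← sub_lt_iff_lt_add'] at h2
      rw [lt_div_iff₀ ha] at h2
      nlinarith
    · nlinarith
  have hgpos : ∀ t ∈ Ico t₁ b, 0 < 1 - γ * K * (t - t₁) / x₁ := by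
    intro t ht
    obtain ⟨h1, _⟩ := hupos t ht
    have : 0 < x₁ - γ * K * (t - t₁) := lt_trans (by positivity) h1
    have h3 : γ * K * (t - t₁) / x₁ < 1 := by
      rw [div_lt_one hx₁pos]; linarith
    linarith
  rw [hfun, hIeq]
  apply strictMonoOn_of_deriv_pos (convex_Ico t₁ b)
  · apply ContinuousOn.add _ continuousOn_id
    apply ContinuousOn.add
    · apply Continuous.continuousOn; continuity
    · apply ContinuousOn.mul continuousOn_const
      exact ContinuousOn.log (Continuous.continuousOn (by continuity))
        (fun t ht => (hgpos t ht).ne')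
  · intro t ht
    rw [interior_Ico] at ht
    have htm : t ∈ Ico t₁ b := ⟨le_of_lt ht.1, ht.2⟩
    have hg := hgpos t htm
    obtain ⟨hu1, hu2⟩ := hupos t htm
    set u : ℝ := x₁ - γ * K * (t - t₁) with hu
    have hu0 : 0 < u := lt_trans (by positivity) hu1
    have hgu : 1 - γ * K * (t - t₁) / x₁ = u / x₁ := by
      field_simp
      exact hu.symm
    have h1 : HasDerivAt (fun s => 1 - γ * K * (s - t₁) / x₁) (-(γ * K / x₁)) t := by
      have : HasDerivAt (fun s : ℝ => γ * K * (s - t₁) / x₁) (γ * K / x₁) t := by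
        have := (((hasDerivAt_id t).sub_const t₁).const_mul (γ * K)).div_const x₁
        simpa using this
      simpa using this.const_sub 1
    have h2 : HasDerivAt (fun s => Real.log (1 - γ * K * (s - t₁) / x₁))
        (-(γ * K / x₁) / (1 - γ * K * (t - t₁) / x₁)) t := h1.log hg.ne'
    have h3 : HasDerivAt (fun s => τ + σf * (s - t₁) / (σs - σf)
        + (γ * K * (σs - σf))⁻¹ * Real.log (1 - γ * K * (s - t₁) / x₁) + s)
        (σf / (σs - σf) + (γ * K * (σs - σf))⁻¹ *
          (-(γ * K / x₁) / (1 - γ * K * (t - t₁) / x₁)) + 1) t := by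
      have hlin : HasDerivAt (fun s : ℝ => τ + σf * (s - t₁) / (σs - σf)) (σf / (σs - σf)) t := by
        have := (((hasDerivAt_id t).sub_const t₁).const_mul σf).div_const (σs - σf)
        simpa using (this.const_add τ)
      exact ((hlin.add (h2.const_mul _)).add (hasDerivAt_id t))
    rw [h3.deriv]
    rw [hgu]
    rw [H_deriv_eq σs σf (γ * K) u x₁ ha.ne' hc.ne hu0.ne' hx₁pos.ne']
    have hkey : σs * u < 1 := lt_of_le_of_lt (mul_le_of_le_one_right hσs hu2) hσs1
    exact div_pos (by linarith) (mul_pos (by linarith) hu0)
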